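/- Every nonnegative real matrix of rank at most 2 admits a factorization M = A B with A a nonnegative p×2 matrix and B a nonnegative 2×q matrix; i.e., for nonnegative matrices, rank at most 2 implies nonnegative rank at most 2. -/

import Mathlib

open Matrix

theorem stmt4 {p q : ℕ} (M : Matrix (Fin p) (Fin q) ℝ)
    (hM : ∀ i j, 0 ≤ M i j) (hr : M.rank ≤ 2) :
    ∃ (A : Matrix (Fin p) (Fin 2) ℝ) (B : Matrix (Fin 2) (Fin q) ℝ),
      (∀ i t, 0 ≤ A i t) ∧ (∀ t j, 0 ≤ B t j) ∧ M = A * B := by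
  classical
  by_cases hz : ∀ j i, M i j = 0
  · refine ⟨0, 0, by simp, by simp, ?_⟩
    ext i j; simp [hz j i]
  push_neg at hz
  obtain ⟨j1, i1, hij1⟩ := hz
  -- column sums
  set s : Fin q → ℝ := fun j => ∑ i, M i j with hs
  have hs_nonneg : ∀ j, 0 ≤ s j := fun j => Finset.sum_nonneg fun i _ => hM i j
  have hs_pos : ∀ j, (∃ i, M i j ≠ 0) → 0 < s j := by
    intro j ⟨i, hi⟩
    have : 0 < M i j := lt_of_le_of_ne (hM i j) (Ne.symm hi)
    exact Finset.sum_pos' (fun k _ => hM k j) ⟨i, Finset.mem_univ i, this⟩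
  have hs_col : ∀ j, s j = 0 → ∀ i, M i j = 0 := by
    intro j hj i
    by_contra h
    exact absurd hj (ne_of_gt (hs_pos j ⟨i, h⟩))
  -- normalized columns
  set d : Fin q → (Fin p → ℝ) := fun j => (s j)⁻¹ • (fun i => M i j) with hd
  -- linear functional: sum of coordinates
  set L : (Fin p → ℝ) →ₗ[ℝ] ℝ := ∑ i, LinearMap.proj i with hL
  have hLapp : ∀ v : Fin p → ℝ, L v = ∑ i, v i := by
    intro v; simp [hL, LinearMap.sum_apply]
  set V : Submodule ℝ (Fin p → ℝ) := Submodule.span ℝ (Set.range Mᵀ) with hV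
  have hVrank : Module.finrank ℝ V ≤ 2 := by
    rw [Matrix.rank_eq_finrank_span_cols] at hr; exact hr
  have hcolV : ∀ j, Mᵀ j ∈ V := fun j => Submodule.subset_span (Set.mem_range_self j)
  have hdV : ∀ j, d j ∈ V := by
    intro j
    have : Mᵀ j = fun i => M i j := rfl
    exact Submodule.smul_mem V _ (this ▸ hcolV j)
  have hLd : ∀ j, 0 < s j → L (d j) = 1 := by
    intro j hj
    have h1 : L (d j) = (s j)⁻¹ * ∑ i, M i j := by
      simp [hd, hLapp, Finset.mul_sum]
    rw [h1]
    exact inv_mul_cancel₀ (ne_of_gt hj)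
  set W : Submodule ℝ (Fin p → ℝ) := V ⊓ LinearMap.ker L with hW
  have hs1 : 0 < s j1 := hs_pos j1 ⟨i1, hij1⟩
  have hWlt : W < V := by
    refine lt_of_le_of_ne inf_le_left fun h => ?_
    have hm : d j1 ∈ W := h ▸ hdV j1
    have h2 : L (d j1) = 0 := (Submodule.mem_inf.mp hm).2
    rw [hLd j1 hs1] at h2
    norm_num at h2
  have hWone : Module.finrank ℝ W ≤ 1 := by
    have := Submodule.finrank_lt_finrank_of_lt hWlt
    omega
  obtain ⟨w, hwspan⟩ := (Submodule.finrank_le_one_iff_isPrincipal W).mp hWone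
  have hmemW : ∀ j, 0 < s j → d j - d j1 ∈ W := by
    intro j hj
    refine Submodule.mem_inf.mpr ⟨V.sub_mem (hdV j) (hdV j1), ?_⟩
    rw [LinearMap.mem_ker, map_sub, hLd j hj, hLd j1 hs1, sub_self]
  have hkey : ∀ j, 0 < s j → ∃ t : ℝ, d j = d j1 + t • w := by
    intro j hj
    have := hmemW j hj
    rw [hwspan, Submodule.mem_span_singleton] at this
    obtain ⟨t, ht⟩ := this
    exact ⟨t, by rw [ht]; abel⟩
  -- choose parameters
  set t : Fin q → ℝ := fun j => if h : 0 < s j then (hkey j h).choose else 0 with htdef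
  have htspec : ∀ j (h : 0 < s j), d j = d j1 + t j • w := by
    intro j h
    simp only [htdef, dif_pos h]
    exact (hkey j h).choose_spec
  set S : Finset (Fin q) := Finset.univ.filter (fun j => 0 < s j) with hS
  have hSne : S.Nonempty := ⟨j1, by simp [hS, hs1]⟩
  obtain ⟨ja, hjaS, hja⟩ := S.exists_min_image t hSne
  obtain ⟨jb, hjbS, hjb⟩ := S.exists_max_image t hSne
  have hsa : 0 < s ja := (Finset.mem_filter.mp hjaS).2
  have hsb : 0 < s jb := (Finset.mem_filter.mp hjbS).2
  -- coefficients
  set δ : ℝ := t jb - t ja with hδ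
  set lam : Fin q → ℝ := fun j => if δ = 0 then 1 else (t jb - t j) / δ with hlam
  set mu : Fin q → ℝ := fun j => if δ = 0 then 0 else (t j - t ja) / δ with hmu
  have hδnn : 0 ≤ δ := sub_nonneg.mpr (hja jb hjbS)
  have hbounds : ∀ j ∈ S, t ja ≤ t j ∧ t j ≤ t jb := fun j hj => ⟨hja j hj, hjb j hj⟩
  have hlam_nn : ∀ j ∈ S, 0 ≤ lam j := by
    intro j hj
    simp only [hlam]
    split
    · norm_num
    · exact div_nonneg (sub_nonneg.mpr (hbounds j hj).2) hδnn
  have hmu_nn : ∀ j ∈ S, 0 ≤ mu j := by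
    intro j hj
    simp only [hmu]
    split
    · norm_num
    · exact div_nonneg (sub_nonneg.mpr (hbounds j hj).1) hδnn
  have hcomb : ∀ j ∈ S, d j = lam j • d ja + mu j • d jb := by
    intro j hj
    have hsj : 0 < s j := (Finset.mem_filter.mp hj).2
    have e1 : d j = d j1 + t j • w := htspec j hsj
    have ea : d ja = d j1 + t ja • w := htspec ja hsa
    have eb : d jb = d j1 + t jb • w := htspec jb hsb
    by_cases hδ0 : δ = 0
    · have : t ja = t jb := by rw [hδ] at hδ0; linarith
      have htj : t j = t ja := le_antisymm (this ▸ (hbounds j hj).2) (hbounds j hj).1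
      simp only [hlam, hmu, if_pos hδ0]
      rw [e1, ea, htj]
      simp
    · have hsum : lam j + mu j = 1 := by
        simp only [hlam, hmu, if_neg hδ0]
        field_simp
        rw [hδ]; ring
      have hmix : lam j * t ja + mu j * t jb = t j := by
        simp only [hlam, hmu, if_neg hδ0]
        field_simp
        ring
      rw [e1, ea, eb]
      funext i
      simp only [Pi.add_apply, Pi.smul_apply, smul_eq_mul]
      linear_combination (-(d j1 i)) * hsum + (-(w i)) * hmix
  -- build the factorization
  refine ⟨fun i k => if k = 0 then d ja i else d jb i,
          fun k j => if 0 < s j then (if k = 0 then s j * lam j else s j * mu j) else 0,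
          ?_, ?_, ?_⟩
  · intro i k
    have h1 : 0 ≤ d ja i := mul_nonneg (inv_nonneg.mpr (hs_nonneg _)) (hM i _)
    have h2 : 0 ≤ d jb i := mul_nonneg (inv_nonneg.mpr (hs_nonneg _)) (hM i _)
    dsimp only
    split <;> assumption
  · intro k j
    dsimp only
    split
    · rename_i hsj
      have hjS : j ∈ S := Finset.mem_filter.mpr ⟨Finset.mem_univ j, hsj⟩
      split
      · exact mul_nonneg (hs_nonneg j) (hlam_nn j hjS)
      · exact mul_nonneg (hs_nonneg j) (hmu_nn j hjS)
    · exact le_refl 0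
  · refine Matrix.ext fun i j => ?_
    show M i j = ∑ k : Fin 2, (if k = 0 then d ja i else d jb i) *
      (if 0 < s j then (if k = 0 then s j * lam j else s j * mu j) else 0)
    rw [Fin.sum_univ_two]
    by_cases hsj : 0 < s j
    · have hjS : j ∈ S := Finset.mem_filter.mpr ⟨Finset.mem_univ j, hsj⟩
      have hc := hcomb j hjS
      have hci : d j i = lam j * d ja i + mu j * d jb i := by
        rw [hc]; simp [Pi.add_apply]
      have hdji : d j i = (s j)⁻¹ * M i j := rfl
      simp only [if_pos hsj]
      norm_num
      have : M i j = s j * d j i := by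
        rw [hdji, ← mul_assoc, mul_inv_cancel₀ (ne_of_gt hsj), one_mul]
      rw [this, hci]
      ring
    · have : s j = 0 := le_antisymm (not_lt.mp hsj) (hs_nonneg j)
      simp [if_neg hsj, hs_col j this i]
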